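/- Let q ≥ 2 be an even integer and n ≥ 2 an integer. Then the period of any orientable sequence of order n over ℤ_q is at most (q^n − q^{⌈n/2⌉} − q)/2. -/

import Mathlib

namespace OSeq

variable {q : ℕ}

/-- The `n`-tuple (window) of the sequence `s` at position `i`. -/
def window (s : ℤ → ZMod q) (n : ℕ) (i : ℤ) : Fin n → ZMod q :=
  fun k => s (i + (k : ℕ))

/-- The reverse of an `n`-tuple. -/
def tupRev {n : ℕ} (u : Fin n → ZMod q) : Fin n → ZMod q :=
  fun k => u k.rev

/-- `m` is the (least) period of the periodic sequence `s`. -/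
def IsPeriod (s : ℤ → ZMod q) (m : ℕ) : Prop :=
  0 < m ∧ (∀ i : ℤ, s (i + (m : ℤ)) = s i) ∧
    ∀ m' : ℕ, 0 < m' → (∀ i : ℤ, s (i + (m' : ℤ)) = s i) → m ≤ m'

/-- `s` is an `n`-window sequence of period `m`. -/
def IsNWindowSeq (s : ℤ → ZMod q) (n m : ℕ) : Prop :=
  IsPeriod s m ∧ ∀ i j : ℤ, window s n i = window s n j → i ≡ j [ZMOD (m : ℤ)]

/-- `s` is an orientable sequence of order `n` and period `m`. -/
def IsOS (s : ℤ → ZMod q) (n m : ℕ) : Prop :=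
  IsNWindowSeq s n m ∧ ∀ i j : ℤ, window s n i ≠ tupRev (window s n j)

/-- `s` is a negative orientable sequence of order `n` and period `m`. -/
def IsNOS (s : ℤ → ZMod q) (n m : ℕ) : Prop :=
  IsNWindowSeq s n m ∧ ∀ i j : ℤ, window s n i ≠ - tupRev (window s n j)

/-- `s` is a special orientable sequence of order `n` and period `m`:
orientable and also negative orientable. -/
def IsSpecialOS (s : ℤ → ZMod q) (n m : ℕ) : Prop :=
  IsOS s n m ∧ ∀ i j : ℤ, window s n i ≠ - tupRev (window s n j)

/-- The weight modulo `q` of one period of `s`. -/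
def wq (s : ℤ → ZMod q) (m : ℕ) : ZMod q :=
  ∑ i ∈ Finset.range m, s (i : ℤ)

/-- The alternating sign weight modulo `q` of one period of `s`. -/
def wqA (s : ℤ → ZMod q) (m : ℕ) : ZMod q :=
  ∑ i ∈ Finset.range m, (-1 : ZMod q) ^ (m - 1 - i) * s (i : ℤ)

/-- The Lempel homomorphism `D` on sequences. -/
def D (t : ℤ → ZMod q) : ℤ → ZMod q := fun j => t (j + 1) - t j

/-- The homomorphism `A` on sequences. -/
def A (t : ℤ → ZMod q) : ℤ → ZMod q := fun j => t (j + 1) + t j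

/-- Shift of a sequence by `c`. -/
def shift (t : ℤ → ZMod q) (c : ℤ) : ℤ → ZMod q := fun i => t (i + c)

/-- `t'` is a translate of `t`. -/
def IsTranslate (t t' : ℤ → ZMod q) : Prop := ∃ c : ZMod q, ∀ i : ℤ, t' i = t i + c

/-- `t'` is an alternating sign translate of `t`. -/
def IsAltTranslate (t t' : ℤ → ZMod q) : Prop :=
  ∃ c : ZMod q, ∀ i : ℤ, t' i = t i + (if i % 2 = 0 then c else -c)

/-- Two sequences are (`n`-window) disjoint. -/
def WindowDisjoint (n : ℕ) (s t : ℤ → ZMod q) : Prop :=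
  ∀ i j : ℤ, window s n i ≠ window t n j

/-- Orientable-disjoint. -/
def ODisjoint (n : ℕ) (s t : ℤ → ZMod q) : Prop :=
  WindowDisjoint n s t ∧ ∀ i j : ℤ, window s n i ≠ tupRev (window t n j)

/-- Negative orientable-disjoint (no-disjoint). -/
def NODisjoint (n : ℕ) (s t : ℤ → ZMod q) : Prop :=
  WindowDisjoint n s t ∧ ∀ i j : ℤ, window s n i ≠ - tupRev (window t n j)

/-- Special-orientable-disjoint. -/
def SpecialODisjoint (n : ℕ) (s t : ℤ → ZMod q) : Prop :=
  ODisjoint n s t ∧ ∀ i j : ℤ, window s n i ≠ - tupRev (window t n j)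

/-- The string `a^t` appears in `s`. -/
def HasString (s : ℤ → ZMod q) (a : ZMod q) (t : ℕ) : Prop :=
  ∃ j : ℤ, ∀ k : ℕ, k < t → s (j + (k : ℤ)) = a

/-- There is a run `a^t` of `a` in `s` starting at position `j`. -/
def IsRunAt (s : ℤ → ZMod q) (a : ZMod q) (j : ℤ) (t : ℕ) : Prop :=
  (∀ k : ℕ, k < t → s (j + (k : ℤ)) = a) ∧ s (j - 1) ≠ a ∧ s (j + (t : ℤ)) ≠ a

/-- `a^t` is a maximal run of `a` in `s`: the string `a^t` appears and every
string `a^{t'}` appearing in `s` has `t' ≤ t`. -/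
def IsMaxRun (s : ℤ → ZMod q) (a : ZMod q) (t : ℕ) : Prop :=
  HasString s a t ∧ ∀ t' : ℕ, HasString s a t' → t' ≤ t

/-- `k`-th entry of the alternating string `a, -a, a, -a, ...`. -/
def altVal (a : ZMod q) (k : ℕ) : ZMod q := if k % 2 = 0 then a else -a

/-- The signed string `ạ^t` (alternating `a, -a, ...`) appears in `s`. -/
def HasSignedString (s : ℤ → ZMod q) (a : ZMod q) (t : ℕ) : Prop :=
  ∃ j : ℤ, ∀ k : ℕ, k < t → s (j + (k : ℤ)) = altVal a k

/-- There is a signed run `ạ^t` of `a` in `s` starting at position `j`. -/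
def IsSignedRunAt (s : ℤ → ZMod q) (a : ZMod q) (j : ℤ) (t : ℕ) : Prop :=
  (∀ k : ℕ, k < t → s (j + (k : ℤ)) = altVal a k) ∧
    s (j - 1) ≠ -a ∧ s (j + (t : ℤ)) ≠ altVal a t

/-- `ạ^t` is a maximal signed run of `a` in `s`. -/
def IsMaxSignedRun (s : ℤ → ZMod q) (a : ZMod q) (t : ℕ) : Prop :=
  HasSignedString s a t ∧ ∀ t' : ℕ, HasSignedString s a t' → t' ≤ t

/-- The sequence obtained from the ring sequence `[s_0,...,s_{m-1}]` of `s` by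
inserting one extra symbol `a` at ring position `r`, i.e. with ring sequence
`[s_0,...,s_{r-1}, a, s_r, ..., s_{m-1}]` of length `m+1`. -/
def insert1 (s : ℤ → ZMod q) (m r : ℕ) (a : ZMod q) : ℤ → ZMod q :=
  fun j =>
    let j' := (j % ((m : ℤ) + 1)).toNat
    if j' < r then s (j' : ℤ) else if j' = r then a else s ((j' : ℤ) - 1)

/-- The sequence obtained from the ring sequence `[s_0,...,s_{m-1}]` of `s` by
inserting the two symbols `a, -a` at ring position `r`, i.e. with ring sequence
`[s_0,...,s_{r-1}, a, -a, s_r, ..., s_{m-1}]` of length `m+2`. -/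
def insert2 (s : ℤ → ZMod q) (m r : ℕ) (a : ZMod q) : ℤ → ZMod q :=
  fun j =>
    let j' := (j % ((m : ℤ) + 2)).toNat
    if j' < r then s (j' : ℤ)
    else if j' = r then a
    else if j' = r + 1 then -a
    else s ((j' : ℤ) - 2)

/-- The operation `E_a` (with the convention `E_0(S) = S`). -/
def Emod (s : ℤ → ZMod q) (m r : ℕ) (a : ZMod q) : ℤ → ZMod q :=
  if a = 0 then s else insert1 s m r a

/-- A sequence is good (for order `n`) if every run of `0` has length at most `n-2`. -/
def GoodSeq (s : ℤ → ZMod q) (n : ℕ) : Prop :=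
  ∀ t : ℕ, HasString s 0 t → t ≤ n - 2

/-- A tuple is uniform if it is constant. -/
def Uniform {n : ℕ} (u : Fin n → ZMod q) : Prop := ∃ c : ZMod q, ∀ i, u i = c

/-- A tuple is symmetric if it equals its own reverse. -/
def Symm {n : ℕ} (u : Fin n → ZMod q) : Prop := ∀ i : Fin n, u i = u i.rev

/-- An `n`-tuple is `m`-symmetric (`m ≤ n`) if `u_i = u_{m-1-i}` for `0 ≤ i ≤ m-1`. -/
def MSymm {n : ℕ} (u : Fin n → ZMod q) (m : ℕ) (hm : m ≤ n) : Prop :=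
  ∀ i : Fin m, u (Fin.castLE hm i) = u (Fin.castLE hm i.rev)

/-- An `n`-tuple (`n ≥ 2`) is alternating. -/
def Alternating {n : ℕ} (hn : 2 ≤ n) (u : Fin n → ZMod q) : Prop :=
  u ⟨0, by omega⟩ ≠ u ⟨1, by omega⟩ ∧
    ∀ i : Fin n, u i = if (i : ℕ) % 2 = 0 then u ⟨0, by omega⟩ else u ⟨1, by omega⟩

/-- `L_n(v)`: the set of `n`-tuples whose first `n-r` entries agree with the
`(n-r)`-tuple `v`. -/
def Lset (n r : ℕ) (v : Fin (n - r) → ZMod q) : Set (Fin n → ZMod q) :=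
  {u | ∀ i : Fin (n - r), u (Fin.castLE (Nat.sub_le n r) i) = v i}

/-- The `n`-tuple `u` appears in the sequence `s`. -/
def AppearsIn (s : ℤ → ZMod q) (n : ℕ) (u : Fin n → ZMod q) : Prop :=
  ∃ i : ℤ, window s n i = u

end OSeq

open OSeq

section Aux

variable {q n m : ℕ}

private lemma s_mul_period (s : ℤ → ZMod q) (hper : ∀ i : ℤ, s (i + (m : ℤ)) = s i) :
    ∀ (t i : ℤ), s (i + (m : ℤ) * t) = s i := by
  intro t
  induction t using Int.induction_on with
  | zero => intro i; simp
  | succ k ih =>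
      intro i
      have h1 : i + (m : ℤ) * ((k : ℤ) + 1) = i + (m : ℤ) * (k : ℤ) + (m : ℤ) := by ring
      rw [h1, hper, ih]
  | pred k ih =>
      intro i
      have h2 := hper (i + (m : ℤ) * (-(k : ℤ) - 1))
      have h1 : i + (m : ℤ) * (-(k : ℤ) - 1) + (m : ℤ) = i + (m : ℤ) * (-(k : ℤ)) := by ring
      rw [h1] at h2
      rw [← h2, ih]

private lemma s_congr (s : ℤ → ZMod q) (hper : ∀ i : ℤ, s (i + (m : ℤ)) = s i)
    {i j : ℤ} (hij : i % (m : ℤ) = j % (m : ℤ)) : s i = s j := by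
  obtain ⟨t, ht⟩ : (m : ℤ) ∣ j - i := Int.ModEq.dvd hij
  have hj : j = i + (m : ℤ) * t := by linarith
  rw [hj, s_mul_period s hper]

private lemma window_congr (s : ℤ → ZMod q) (hper : ∀ i : ℤ, s (i + (m : ℤ)) = s i)
    {i j : ℤ} (hij : i % (m : ℤ) = j % (m : ℤ)) : window s n i = window s n j := by
  funext k
  exact s_congr s hper (Int.ModEq.add_right _ hij)

private def tupO (q n : ℕ) (a c : ZMod q) : Fin n → ZMod q :=
  fun k => if (k : ℕ) + 1 = n then c else a

private def tupX (q n : ℕ) (a c : ZMod q) : Fin n → ZMod q :=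
  fun k => if (k : ℕ) = 0 then c else a

private lemma tupRev_tupO (a c : ZMod q) : tupRev (tupO q n a c) = tupX q n a c := by
  funext k
  have hk := k.isLt
  show (tupO q n a c) k.rev = _
  simp only [tupO, tupX, Fin.val_rev]
  by_cases h0 : (k : ℕ) = 0
  · rw [if_pos (by omega), if_pos h0]
  · rw [if_neg (by omega), if_neg h0]

private lemma window_eq_tupO (s : ℤ → ZMod q) (hn : 2 ≤ n) {i : ℤ} {a : ZMod q}
    (h : ∀ k : ℕ, k < n - 1 → s (i + (k : ℤ)) = a) :
    window s n i = tupO q n a (s (i + ((n - 1 : ℕ) : ℤ))) := by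
  funext k
  have hk := k.isLt
  show s (i + ((k : ℕ) : ℤ)) = if (k : ℕ) + 1 = n then _ else a
  by_cases hkn : (k : ℕ) + 1 = n
  · have h1 : (k : ℕ) = n - 1 := by omega
    rw [if_pos hkn, h1]
  · rw [if_neg hkn]
    exact h k (by omega)

private lemma tupO_decomp (s : ℤ → ZMod q) (hn : 2 ≤ n) {i : ℤ} {a c : ZMod q}
    (h : window s n i = tupO q n a c) :
    (∀ k : ℕ, k < n - 1 → s (i + (k : ℤ)) = a) ∧ s (i + ((n - 1 : ℕ) : ℤ)) = c := by
  constructor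
  · intro k hk
    have h2 : s (i + (k : ℤ)) = if k + 1 = n then c else a := congrFun h ⟨k, by omega⟩
    rwa [if_neg (by omega)] at h2
  · have h2 : s (i + ((n - 1 : ℕ) : ℤ)) = if (n - 1) + 1 = n then c else a :=
      congrFun h ⟨n - 1, by omega⟩
    rwa [if_pos (by omega)] at h2

private lemma window_eq_tupX (s : ℤ → ZMod q) (hn : 2 ≤ n) {i : ℤ} {a : ZMod q}
    (h : ∀ k : ℕ, k < n - 1 → s (i + 1 + (k : ℤ)) = a) :
    window s n i = tupX q n a (s i) := by
  funext k
  have hk := k.isLt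
  show s (i + ((k : ℕ) : ℤ)) = if (k : ℕ) = 0 then s i else a
  by_cases h0 : (k : ℕ) = 0
  · rw [if_pos h0, h0]
    norm_num
  · rw [if_neg h0]
    have h2 := h ((k : ℕ) - 1) (by omega)
    have h3 : i + 1 + (((k : ℕ) - 1 : ℕ) : ℤ) = i + ((k : ℕ) : ℤ) := by
      have h4 : ((((k : ℕ) - 1 : ℕ)) : ℤ) = ((k : ℕ) : ℤ) - 1 := by omega
      rw [h4]; ring
    rwa [h3] at h2

private lemma tupX_decomp (s : ℤ → ZMod q) (hn : 2 ≤ n) {i : ℤ} {a c : ZMod q}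
    (h : window s n i = tupX q n a c) :
    (∀ k : ℕ, k < n - 1 → s (i + 1 + (k : ℤ)) = a) ∧ s i = c := by
  constructor
  · intro k hk
    have h2 : s (i + ((k + 1 : ℕ) : ℤ)) = if (k + 1 : ℕ) = 0 then c else a :=
      congrFun h ⟨k + 1, by omega⟩
    rw [if_neg (by omega)] at h2
    rw [show i + 1 + (k : ℤ) = i + ((k + 1 : ℕ) : ℤ) by push_cast; ring]
    exact h2
  · have h2 : s (i + ((0 : ℕ) : ℤ)) = if (0 : ℕ) = 0 then c else a :=
      congrFun h ⟨0, by omega⟩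
    rw [if_pos rfl] at h2
    simpa using h2

end Aux

/-- For even `q ≥ 2` and `n ≥ 2`, the period of any orientable sequence of order `n`
over `ℤ_q` is at most `(q^n - q^⌈n/2⌉ - q)/2`. -/
theorem period_le_of_orientable_even {q n m : ℕ} (hq : 2 ≤ q) (hqeven : Even q)
    (hn : 2 ≤ n) (s : ℤ → ZMod q) (hS : IsOS s n m) :
    2 * (m : ℤ) ≤ (q : ℤ) ^ n - (q : ℤ) ^ ((n + 1) / 2) - q := by
  classical
  obtain ⟨⟨⟨hm0, hper, -⟩, hwin⟩, hOr⟩ := hS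
  haveI : NeZero q := ⟨by omega⟩
  have hmne : (m : ℤ) ≠ 0 := by exact_mod_cast hm0.ne'
  have hmpos : (0 : ℤ) < (m : ℤ) := by exact_mod_cast hm0
  -- index injectivity
  have intEq : ∀ i ∈ Finset.range m, ∀ j ∈ Finset.range m,
      (i : ℤ) % (m : ℤ) = (j : ℤ) % (m : ℤ) → i = j := by
    intro i hi j hj hij
    rw [Finset.mem_range] at hi hj
    rw [Int.emod_eq_of_lt (by positivity) (by exact_mod_cast hi),
        Int.emod_eq_of_lt (by positivity) (by exact_mod_cast hj)] at hij
    exact_mod_cast hij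
  set W : Finset (Fin n → ZMod q) :=
    (Finset.range m).image (fun i : ℕ => window s n (i : ℤ)) with hW
  have memW_of : ∀ i : ℤ, window s n i ∈ W := by
    intro i
    have h1 := Int.emod_nonneg i hmne
    have h2 := Int.emod_lt_of_pos i hmpos
    refine Finset.mem_image.2 ⟨(i % (m : ℤ)).toNat, Finset.mem_range.2 (by omega), ?_⟩
    show window s n (((i % (m : ℤ)).toNat : ℕ) : ℤ) = window s n i
    rw [Int.toNat_of_nonneg h1]
    exact window_congr s hper (Int.emod_emod_of_dvd i dvd_rfl)
  have memW : ∀ u ∈ W, ∃ i : ℤ, window s n i = u := by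
    intro u hu
    obtain ⟨i, -, hi⟩ := Finset.mem_image.1 hu
    exact ⟨(i : ℤ), hi⟩
  have cardW : W.card = m := by
    rw [hW, Finset.card_image_of_injOn, Finset.card_range]
    intro i hi j hj hij
    exact intEq i (Finset.mem_coe.1 hi) j (Finset.mem_coe.1 hj) (hwin (i : ℤ) (j : ℤ) hij)
  have revW : ∀ u ∈ W, tupRev u ∉ W := by
    intro u hu hru
    obtain ⟨i, hi⟩ := memW u hu
    obtain ⟨j, hj⟩ := memW _ hru
    exact hOr j i (by rw [hi]; exact hj)
  have revrev : ∀ u : Fin n → ZMod q, tupRev (tupRev u) = u := by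
    intro u; funext k
    show u k.rev.rev = u k
    rw [Fin.rev_rev]
  have tupO_zero : ∀ a c : ZMod q, tupO q n a c ⟨0, by omega⟩ = a := by
    intro a c
    show (if (0 : ℕ) + 1 = n then c else a) = a
    rw [if_neg (by omega)]
  -- the key existence, for each a, of a missing reverse-pair
  have exC : ∀ a : ZMod q, ∃ c : ZMod q, c ≠ a ∧ tupO q n a c ∉ W ∧ tupX q n a c ∉ W := by
    intro a
    set I : Finset ℕ := (Finset.range m).filter
      (fun i => ∀ k : ℕ, k < n - 1 → s ((i : ℤ) + (k : ℤ)) = a) with hI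
    set O : Finset (ZMod q) := Finset.univ.filter (fun c => tupO q n a c ∈ W) with hO
    set X : Finset (ZMod q) := Finset.univ.filter (fun c => tupX q n a c ∈ W) with hX
    have cardO : O.card = I.card := by
      have himg : O = I.image (fun i : ℕ => s ((i : ℤ) + ((n - 1 : ℕ) : ℤ))) := by
        ext c
        simp only [hO, hI, Finset.mem_filter, Finset.mem_univ, true_and, Finset.mem_image,
          Finset.mem_range]
        constructor
        · intro hc
          obtain ⟨i, hi⟩ := memW _ hc
          obtain ⟨ha, hc'⟩ := tupO_decomp s hn hi
          have h1 := Int.emod_nonneg i hmne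
          have h2 := Int.emod_lt_of_pos i hmpos
          set i0 : ℕ := (i % (m : ℤ)).toNat with hi0
          have hmod : (i0 : ℤ) % (m : ℤ) = i % (m : ℤ) := by
            rw [hi0, Int.toNat_of_nonneg h1]
            exact Int.emod_emod_of_dvd i dvd_rfl
          refine ⟨i0, ⟨by omega, ?_⟩, ?_⟩
          · intro k hk
            exact (s_congr s hper (Int.ModEq.add_right _ hmod)).trans (ha k hk)
          · exact (s_congr s hper (Int.ModEq.add_right _ hmod)).trans hc'
        · rintro ⟨i, ⟨hi1, hi2⟩, rfl⟩
          rw [← window_eq_tupO s hn hi2]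
          exact memW_of _
      rw [himg, Finset.card_image_of_injOn]
      intro i hi j hj hij
      simp only [hI, Finset.coe_filter, Set.mem_setOf_eq, Finset.mem_range] at hi hj
      have e1 := window_eq_tupO s hn hi.2
      have e2 := window_eq_tupO s hn hj.2
      have hij' : s ((i : ℤ) + ((n - 1 : ℕ) : ℤ)) = s ((j : ℤ) + ((n - 1 : ℕ) : ℤ)) := hij
      rw [hij'] at e1
      exact intEq i (Finset.mem_range.2 hi.1) j (Finset.mem_range.2 hj.1)
        (hwin _ _ (e1.trans e2.symm))
    have cardX : X.card = I.card := by
      have himg : X = I.image (fun i : ℕ => s ((i : ℤ) - 1)) := by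
        ext c
        simp only [hX, hI, Finset.mem_filter, Finset.mem_univ, true_and, Finset.mem_image,
          Finset.mem_range]
        constructor
        · intro hc
          obtain ⟨i, hi⟩ := memW _ hc
          obtain ⟨ha, hc'⟩ := tupX_decomp s hn hi
          have h1 := Int.emod_nonneg (i + 1) hmne
          have h2 := Int.emod_lt_of_pos (i + 1) hmpos
          set i0 : ℕ := ((i + 1) % (m : ℤ)).toNat with hi0
          have hmod : (i0 : ℤ) % (m : ℤ) = (i + 1) % (m : ℤ) := by
            rw [hi0, Int.toNat_of_nonneg h1]
            exact Int.emod_emod_of_dvd (i + 1) dvd_rfl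
          have hmod' : ((i0 : ℤ) - 1) % (m : ℤ) = i % (m : ℤ) := by
            have h3 := Int.ModEq.sub_right 1 hmod
            have h4 : ((i0 : ℤ) - 1) ≡ i [ZMOD (m : ℤ)] := by simpa using h3
            exact h4
          refine ⟨i0, ⟨by omega, ?_⟩, ?_⟩
          · intro k hk
            exact (s_congr s hper (Int.ModEq.add_right _ hmod)).trans (ha k hk)
          · exact (s_congr s hper hmod').trans hc'
        · rintro ⟨i, ⟨hi1, hi2⟩, rfl⟩
          have h4 : window s n ((i : ℤ) - 1) = tupX q n a (s ((i : ℤ) - 1)) := by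
            apply window_eq_tupX s hn
            intro k hk
            rw [show (i : ℤ) - 1 + 1 + (k : ℤ) = (i : ℤ) + (k : ℤ) by ring]
            exact hi2 k hk
          rw [← h4]
          exact memW_of _
      rw [himg, Finset.card_image_of_injOn]
      intro i hi j hj hij
      simp only [hI, Finset.coe_filter, Set.mem_setOf_eq, Finset.mem_range] at hi hj
      have e1 : window s n ((i : ℤ) - 1) = tupX q n a (s ((i : ℤ) - 1)) := by
        apply window_eq_tupX s hn
        intro k hk
        rw [show (i : ℤ) - 1 + 1 + (k : ℤ) = (i : ℤ) + (k : ℤ) by ring]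
        exact hi.2 k hk
      have e2 : window s n ((j : ℤ) - 1) = tupX q n a (s ((j : ℤ) - 1)) := by
        apply window_eq_tupX s hn
        intro k hk
        rw [show (j : ℤ) - 1 + 1 + (k : ℤ) = (j : ℤ) + (k : ℤ) by ring]
        exact hj.2 k hk
      have hij' : s ((i : ℤ) - 1) = s ((j : ℤ) - 1) := hij
      rw [hij'] at e1
      have h5 := hwin _ _ (e1.trans e2.symm)
      have h6 : (i : ℤ) % (m : ℤ) = (j : ℤ) % (m : ℤ) := by
        have h7 := Int.ModEq.add_right 1 h5
        have h8 : (i : ℤ) ≡ (j : ℤ) [ZMOD (m : ℤ)] := by simpa using h7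
        exact h8
      exact intEq i (Finset.mem_range.2 hi.1) j (Finset.mem_range.2 hj.1) h6
    have hconst : tupX q n a a = tupO q n a a := by
      funext k
      show (if (k : ℕ) = 0 then a else a) = (if (k : ℕ) + 1 = n then a else a)
      simp
    have hOaa : tupO q n a a ∉ W := by
      intro hmem
      obtain ⟨i, hi⟩ := memW _ hmem
      apply hOr i i
      rw [hi, tupRev_tupO]
      exact hconst.symm
    have haO : a ∉ O := by
      intro h
      exact hOaa (Finset.mem_filter.1 h).2
    have haX : a ∉ X := by
      intro h
      have h2 := (Finset.mem_filter.1 h).2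
      rw [hconst] at h2
      exact hOaa h2
    have hdisj : Disjoint O X := by
      rw [Finset.disjoint_left]
      intro c hcO hcX
      obtain ⟨i, hi⟩ := memW _ (Finset.mem_filter.1 hcO).2
      obtain ⟨j, hj⟩ := memW _ (Finset.mem_filter.1 hcX).2
      exact hOr j i (by rw [hi, hj, tupRev_tupO])
    by_contra hcon
    push_neg at hcon
    have huniv : (Finset.univ : Finset (ZMod q)) = insert a (O ∪ X) := by
      ext c
      simp only [Finset.mem_univ, true_iff, Finset.mem_insert, Finset.mem_union, hO, hX,
        Finset.mem_filter, Finset.mem_univ, true_and]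
      by_cases hca : c = a
      · exact Or.inl hca
      · by_cases htO : tupO q n a c ∈ W
        · exact Or.inr (Or.inl htO)
        · exact Or.inr (Or.inr (hcon c hca htO))
    have hq1 := congrArg Finset.card huniv
    rw [Finset.card_univ, ZMod.card,
      Finset.card_insert_of_notMem (by simp only [Finset.mem_union]; tauto),
      Finset.card_union_of_disjoint hdisj] at hq1
    obtain ⟨t, ht⟩ := hqeven
    omega
  choose c0 hc0 using exC
  set M : Finset (Fin n → ZMod q) := Finset.univ.image (fun a => tupO q n a (c0 a)) with hM
  have hinjM : Function.Injective (fun a : ZMod q => tupO q n a (c0 a)) := by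
    intro a b hab
    have h : tupO q n a (c0 a) ⟨0, by omega⟩ = tupO q n b (c0 b) ⟨0, by omega⟩ :=
      congrFun hab ⟨0, by omega⟩
    rwa [tupO_zero, tupO_zero] at h
  have cardM : M.card = q := by
    rw [hM, Finset.card_image_of_injective _ hinjM, Finset.card_univ, ZMod.card]
  set SymF : Finset (Fin n → ZMod q) := Finset.univ.filter (fun u => u = tupRev u) with hSy
  have cardSym : q ^ ((n + 1) / 2) ≤ SymF.card := by
    set ext0 : (Fin ((n + 1) / 2) → ZMod q) → (Fin n → ZMod q) :=
      fun v k => v ⟨min (k : ℕ) (n - 1 - (k : ℕ)), by have := k.isLt; omega⟩ with hext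
    have hmaps : ∀ v, ext0 v ∈ SymF := by
      intro v
      simp only [hSy, Finset.mem_filter, Finset.mem_univ, true_and]
      funext k
      show ext0 v k = ext0 v k.rev
      have hk := k.isLt
      have hmin : min (k : ℕ) (n - 1 - (k : ℕ))
          = min ((k.rev : ℕ)) (n - 1 - ((k.rev : ℕ))) := by
        rw [Fin.val_rev]; omega
      exact congrArg v (Fin.ext hmin)
    have hinj2 : Function.Injective ext0 := by
      intro v w hvw
      funext j
      have hj := j.isLt
      have h := congrFun hvw ⟨(j : ℕ), by omega⟩
      have hmin : min ((j : ℕ)) (n - 1 - (j : ℕ)) = (j : ℕ) := by omega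
      simp only [hext, hmin] at h
      exact h
    have hcard : (Finset.univ : Finset (Fin ((n + 1) / 2) → ZMod q)).card ≤ SymF.card :=
      Finset.card_le_card_of_injOn ext0 (fun v _ => hmaps v) (hinj2.injOn)
    rwa [Finset.card_univ, Fintype.card_fun, ZMod.card, Fintype.card_fin] at hcard
  set WR : Finset (Fin n → ZMod q) := W.image tupRev with hWR
  have cardWR : WR.card = m := by
    rw [hWR, Finset.card_image_of_injective _ (Function.Involutive.injective revrev), cardW]
  have memWR : ∀ u ∈ WR, tupRev u ∈ W := by
    intro u hu
    obtain ⟨v, hv, hvu⟩ := Finset.mem_image.1 hu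
    rw [← hvu, revrev]
    exact hv
  have d1 : Disjoint W WR := by
    rw [Finset.disjoint_left]
    intro u huW huWR
    have h := revW _ (memWR u huWR)
    rw [revrev] at h
    exact h huW
  have d2 : Disjoint (W ∪ WR) M := by
    rw [Finset.disjoint_left]
    intro u hu huM
    obtain ⟨a, -, ha⟩ := Finset.mem_image.1 huM
    rcases Finset.mem_union.1 hu with h | h
    · rw [← ha] at h
      exact (hc0 a).2.1 h
    · have h2 := memWR u h
      rw [← ha, tupRev_tupO] at h2
      exact (hc0 a).2.2 h2
  have d3 : Disjoint (W ∪ WR ∪ M) SymF := by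
    rw [Finset.disjoint_left]
    intro u hu huS
    have hsym : u = tupRev u := (Finset.mem_filter.1 huS).2
    rcases Finset.mem_union.1 hu with h | h
    · rcases Finset.mem_union.1 h with h | h
      · obtain ⟨i, hi⟩ := memW u h
        exact hOr i i (by rw [hi]; exact hsym)
      · have h2 := memWR u h
        rw [← hsym] at h2
        obtain ⟨i, hi⟩ := memW u h2
        exact hOr i i (by rw [hi]; exact hsym)
    · obtain ⟨a, -, ha⟩ := Finset.mem_image.1 h
      have ha' : tupO q n a (c0 a) = u := ha
      have h0 := congrFun hsym ⟨0, by omega⟩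
      rw [← ha', tupRev_tupO] at h0
      have e1 : tupO q n a (c0 a) ⟨0, by omega⟩ = a := tupO_zero a _
      have e2 : tupX q n a (c0 a) (⟨0, by omega⟩ : Fin n) = c0 a := by
        show (if (0 : ℕ) = 0 then c0 a else a) = c0 a
        rw [if_pos rfl]
      rw [e1, e2] at h0
      exact (hc0 a).1 h0.symm
  have hsum : ((W ∪ WR ∪ M) ∪ SymF).card = m + m + q + SymF.card := by
    rw [Finset.card_union_of_disjoint d3, Finset.card_union_of_disjoint d2,
      Finset.card_union_of_disjoint d1, cardW, cardWR, cardM]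
  have hle := Finset.card_le_univ ((W ∪ WR ∪ M) ∪ SymF)
  rw [hsum, Fintype.card_fun, ZMod.card, Fintype.card_fin] at hle
  have t1 : m + m + q + q ^ ((n + 1) / 2) ≤ m + m + q + SymF.card :=
    Nat.add_le_add_left cardSym _
  have t2 : m + m + q + q ^ ((n + 1) / 2) ≤ q ^ n := le_trans t1 hle
  have t3 : ((m + m + q + q ^ ((n + 1) / 2) : ℕ) : ℤ) ≤ ((q ^ n : ℕ) : ℤ) :=
    Int.ofNat_le.2 t2
  push_cast at t3
  linarith
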